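/- Every element of the unital algebra generated by matrices A^0, …, A^{d-1} ∈ M_D(ℂ) is a linear combination of products A^{w_1} A^{w_2} ⋯ A^{w_k} with k ≤ D² − 1 (together with the identity), i.e., the algebra is spanned by words in the generators of length at most D² − 1. -/

import Mathlib

open Matrix

section Aux
variable {d D : ℕ} (A : Fin d → Matrix (Fin D) (Fin D) ℂ)

private noncomputable def Wspan (k : ℕ) : Submodule ℂ (Matrix (Fin D) (Fin D) ℂ) :=
  Submodule.span ℂ {m | ∃ w : List (Fin d), w.length ≤ k ∧ m = (w.map A).prod}

private lemma Wspan_mono : Monotone (Wspan A) := by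
  intro j k hjk
  apply Submodule.span_mono
  rintro m ⟨w, hw, rfl⟩
  exact ⟨w, hw.trans hjk, rfl⟩

private lemma word_mem_Wspan (w : List (Fin d)) : (w.map A).prod ∈ Wspan A w.length :=
  Submodule.subset_span ⟨w, le_rfl, rfl⟩

private lemma mul_mem_Wspan {k : ℕ} (i : Fin d) {x} (hx : x ∈ Wspan A k) :
    A i * x ∈ Wspan A (k + 1) := by
  have h : Wspan A k ≤ (Wspan A (k + 1)).comap (LinearMap.mulLeft ℂ (A i)) := by
    rw [Wspan, Submodule.span_le]
    rintro m ⟨w, hw, rfl⟩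
    exact Submodule.subset_span ⟨i :: w, by simpa using hw, by simp⟩
  exact h hx

private lemma Wspan_stab {k : ℕ} (h : Wspan A (k + 1) ≤ Wspan A k) :
    ∀ n, Wspan A (k + n) ≤ Wspan A k := by
  intro n
  induction n with
  | zero => exact le_rfl
  | succ n ih =>
    rw [Wspan, Submodule.span_le]
    rintro m ⟨w, hw, rfl⟩
    cases w with
    | nil => exact Submodule.subset_span ⟨[], by simp, by simp⟩
    | cons i w' =>
      have hw' : w'.length ≤ k + n := by simpa using Nat.le_of_succ_le_succ hw
      have hx : (w'.map A).prod ∈ Wspan A k :=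
        ih (Wspan_mono A hw' (word_mem_Wspan A w'))
      simpa using h (mul_mem_Wspan A i hx)

private lemma exists_stab (hD : 0 < D) :
    ∃ k ≤ D ^ 2 - 1, Wspan A (k + 1) ≤ Wspan A k := by
  have hD2 : 1 ≤ D ^ 2 := Nat.one_le_pow _ _ hD
  by_contra hc
  push_neg at hc
  have hlt : ∀ k ≤ D ^ 2 - 1, Wspan A k < Wspan A (k + 1) := fun k hk =>
    lt_of_le_of_ne (Wspan_mono A (Nat.le_succ k)) (fun h => hc k hk (le_of_eq h.symm))
  haveI : Nonempty (Fin D) := ⟨⟨0, hD⟩⟩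
  have hrank : ∀ k ≤ D ^ 2, k + 1 ≤ Module.finrank ℂ (Wspan A k) := by
    intro k hk
    induction k with
    | zero =>
      have h1 : (1 : Matrix (Fin D) (Fin D) ℂ) ∈ Wspan A 0 :=
        Submodule.subset_span ⟨[], by simp, by simp⟩
      refine Module.finrank_pos_iff_exists_ne_zero.mpr ⟨⟨1, h1⟩, ?_⟩
      simp only [ne_eq, Submodule.mk_eq_zero]
      exact one_ne_zero
    | succ k ih =>
      have h1 := ih (by omega)
      have h2 : Module.finrank ℂ (Wspan A k) < Module.finrank ℂ (Wspan A (k + 1)) :=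
        Submodule.finrank_lt_finrank_of_lt (hlt k (by omega))
      omega
  have h3 := hrank (D ^ 2) le_rfl
  have h4 : Module.finrank ℂ (Wspan A (D ^ 2)) ≤ D ^ 2 := by
    have := Submodule.finrank_le (Wspan A (D ^ 2))
    rwa [Module.finrank_matrix, Fintype.card_fin, Module.finrank_self, mul_one, ← pow_two] at this
  omega

private lemma Wspan_all (hD : 0 < D) : ∀ n, Wspan A n ≤ Wspan A (D ^ 2 - 1) := by
  obtain ⟨k, hk, hstab⟩ := exists_stab A hD
  intro n
  rcases le_total n k with h | h
  · exact (Wspan_mono A h).trans (Wspan_mono A hk)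
  · have h2 := Wspan_stab A hstab (n - k)
    rw [Nat.add_sub_cancel' h] at h2
    exact h2.trans (Wspan_mono A hk)

private lemma list_of_range {l : List (Matrix (Fin D) (Fin D) ℂ)}
    (hl : ∀ y ∈ l, y ∈ Set.range A) : ∃ w : List (Fin d), l = w.map A := by
  induction l with
  | nil => exact ⟨[], rfl⟩
  | cons x l ih =>
    obtain ⟨w, hw⟩ := ih (fun y hy => hl y (List.mem_cons_of_mem _ hy))
    obtain ⟨i, hi⟩ := hl x List.mem_cons_self
    exact ⟨i :: w, by simp [hw, hi]⟩

end Aux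

/-- Pappacena's bound: every element of the unital algebra generated by
`A^0, …, A^{d-1} ∈ M_D(ℂ)` is a linear combination of products `A^{w_1} ⋯ A^{w_k}` of
the generators along words `w` of length `k ≤ D² − 1` (the empty word giving the
identity). -/
theorem stmt6 {d D : ℕ} (A : Fin d → Matrix (Fin D) (Fin D) ℂ)
    (a : Matrix (Fin D) (Fin D) ℂ) (ha : a ∈ Algebra.adjoin ℂ (Set.range A)) :
    a ∈ Submodule.span ℂ
      {m : Matrix (Fin D) (Fin D) ℂ |
        ∃ w : List (Fin d), w.length ≤ D ^ 2 - 1 ∧ m = (w.map A).prod} := by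
  rcases Nat.eq_zero_or_pos D with hD | hD
  · subst hD
    have h0 : a = 0 := by ext i j; exact i.elim0
    rw [h0]; exact zero_mem _
  · rw [← Subalgebra.mem_toSubmodule, Algebra.adjoin_eq_span] at ha
    have key : a ∈ Wspan A (D ^ 2 - 1) := by
      refine Submodule.span_le.mpr ?_ ha
      intro x hx
      obtain ⟨l, hl, rfl⟩ := Submonoid.exists_list_of_mem_closure hx
      obtain ⟨w, rfl⟩ := list_of_range A hl
      exact Wspan_all A hD w.length (word_mem_Wspan A w)
    exact key
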